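/- arXiv:1401.7209 — 2 statements merged into one kernel-verified Lean document; each statement's English description precedes it below -/
import Mathlib

section
/- Assume hypothesis (H) and fix λ > 0, μ > 0 with λα + μγ > 0 and λβ + μδ > 0. Let (x(·), y(·)) be a solution to the system starting at (x₀, y₀) ∈ S with λx₀ + μy₀ ≤ r for some r > 0, and set τ(r) := inf{t ≥ 0 : λx(t) + μy(t) = r}. Then τ(r) ≤ r² / (2[λ(λα + μγ) + μ(λβ + μδ)]); in particular τ(r) is finite. -/
open MeasureTheory

def IsSolution (α β γ δ x₀ y₀ : ℝ) (x y : ℝ → ℝ) : Prop :=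
  ContinuousOn x (Set.Ici 0) ∧ ContinuousOn y (Set.Ici 0) ∧
  (∀ t ≥ (0:ℝ), 0 ≤ x t ∧ 0 ≤ y t) ∧
  x 0 = x₀ ∧ y 0 = y₀ ∧
  ∀ t ≥ (0:ℝ),
    volume {s ∈ Set.Icc (0:ℝ) t | x s = 0} = 0 ∧
    volume {s ∈ Set.Icc (0:ℝ) t | y s = 0} = 0 ∧
    IntervalIntegrable (fun s => 1 / x s) volume 0 t ∧
    IntervalIntegrable (fun s => 1 / y s) volume 0 t ∧
    x t = x₀ + α * (∫ s in (0:ℝ)..t, 1 / x s) + β * (∫ s in (0:ℝ)..t, 1 / y s) ∧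
    y t = y₀ + γ * (∫ s in (0:ℝ)..t, 1 / x s) + δ * (∫ s in (0:ℝ)..t, 1 / y s)

lemma half_sq_aux (g : ℝ → ℝ) (hg0 : ∀ s, 0 ≤ g s) (T : ℝ)
    (hgi : IntegrableOn g (Set.Ioc 0 T)) :
    2 * ∫ u in Set.Ioc (0:ℝ) T, (∫ v in Set.Ioc (0:ℝ) u, g v) * g u
      ≤ (∫ u in Set.Ioc (0:ℝ) T, g u) ^ 2 := by
  set μ : Measure ℝ := volume.restrict (Set.Ioc 0 T) with hμ
  have hint : Integrable (fun p : ℝ × ℝ => g p.1 * g p.2) (μ.prod μ) := hgi.mul_prod hgi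
  have hs : MeasurableSet {p : ℝ × ℝ | p.2 < p.1} := measurableSet_lt measurable_snd measurable_fst
  set F := ({p : ℝ × ℝ | p.2 < p.1}.indicator fun q : ℝ × ℝ => g q.1 * g q.2) with hF
  have hFint : Integrable F (μ.prod μ) := hint.indicator hs
  have hswap_int : Integrable (fun p : ℝ × ℝ => F p.swap) (μ.prod μ) := hFint.swap
  have hswap : ∫ p, F p.swap ∂(μ.prod μ) = ∫ p, F p ∂(μ.prod μ) := integral_prod_swap F
  have hpt : ∀ p : ℝ × ℝ, F p + F p.swap ≤ g p.1 * g p.2 := by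
    rintro ⟨u, v⟩
    by_cases h1 : v < u
    · have h2 : ¬ u < v := asymm h1
      simp [hF, Set.indicator, h1, h2]
    · by_cases h2 : u < v
      · simp [hF, Set.indicator, h1, h2, mul_comm]
      · simpa [hF, Set.indicator, h1, h2] using mul_nonneg (hg0 u) (hg0 v)
  have hdouble : ∫ p, F p ∂(μ.prod μ) + ∫ p, F p ∂(μ.prod μ) ≤ (∫ u, g u ∂μ) ^ 2 := by
    have h1 : ∫ p, F p ∂(μ.prod μ) + ∫ p, F p ∂(μ.prod μ)
        = ∫ p, (F p + F p.swap) ∂(μ.prod μ) := by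
      rw [integral_add hFint hswap_int, hswap]
    rw [h1]
    have h2 : ∫ p, (F p + F p.swap) ∂(μ.prod μ) ≤ ∫ p : ℝ × ℝ, g p.1 * g p.2 ∂(μ.prod μ) :=
      integral_mono (hFint.add hswap_int) hint hpt
    calc ∫ p, (F p + F p.swap) ∂(μ.prod μ) ≤ ∫ p : ℝ × ℝ, g p.1 * g p.2 ∂(μ.prod μ) := h2
      _ = (∫ u, g u ∂μ) ^ 2 := by rw [integral_prod_mul]; ring
  have hiter : ∫ p, F p ∂(μ.prod μ)
      = ∫ u in Set.Ioc (0:ℝ) T, (∫ v in Set.Ioc (0:ℝ) u, g v) * g u := by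
    rw [integral_prod F hFint]
    refine integral_congr_ae ?_
    filter_upwards [ae_restrict_mem measurableSet_Ioc] with u hu
    have e1 : (fun v => F (u, v)) = fun v => (Set.Iio u).indicator g v * g u := by
      funext v
      by_cases h : v < u <;> simp [hF, Set.indicator, h, mul_comm]
    rw [e1, integral_mul_const, integral_indicator measurableSet_Iio]
    have e2 : μ.restrict (Set.Iio u) = volume.restrict (Set.Iio u ∩ Set.Ioc 0 T) := by
      rw [hμ, Measure.restrict_restrict measurableSet_Iio]
    have e3 : Set.Iio u ∩ Set.Ioc 0 T = Set.Ioo 0 u := by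
      ext v
      constructor
      · rintro ⟨hv1, hv2, _⟩; exact ⟨hv2, hv1⟩
      · rintro ⟨hv1, hv2⟩; exact ⟨hv2, hv1, le_trans hv2.le hu.2⟩
    rw [e2, e3, ← integral_Ioc_eq_integral_Ioo]
  rw [← hiter]
  linarith [hdouble]

/-- Under (H), with `λ, μ > 0` such that `λα + μγ > 0` and `λβ + μδ > 0`,
if a solution starts at `(x₀, y₀) ∈ S` with `λx₀ + μy₀ ≤ r` for some `r > 0`, then the
hitting time `τ(r) = inf {t ≥ 0 : λ x(t) + μ y(t) = r}` satisfies
`τ(r) ≤ r² / (2[λ(λα + μγ) + μ(λβ + μδ)])`; in particular the set of hitting times is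
nonempty, so `τ(r)` is finite. -/
theorem hitting_time_bound (α β γ δ : ℝ) (hα : 0 < α) (hδ : 0 < δ)
    (hH : max β γ ≥ 0 ∨ β * γ < α * δ)
    (lam mu : ℝ) (hlam : 0 < lam) (hmu : 0 < mu)
    (h1 : 0 < lam * α + mu * γ) (h2 : 0 < lam * β + mu * δ)
    (x₀ y₀ : ℝ) (hx₀ : 0 ≤ x₀) (hy₀ : 0 ≤ y₀)
    (r : ℝ) (hr : 0 < r) (hstart : lam * x₀ + mu * y₀ ≤ r)
    (x y : ℝ → ℝ) (hsol : IsSolution α β γ δ x₀ y₀ x y) :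
    {t : ℝ | 0 ≤ t ∧ lam * x t + mu * y t = r}.Nonempty ∧
      sInf {t : ℝ | 0 ≤ t ∧ lam * x t + mu * y t = r} ≤
        r ^ 2 / (2 * (lam * (lam * α + mu * γ) + mu * (lam * β + mu * δ))) := by
  obtain ⟨hxc, hyc, hnn, hx0, hy0, hmain⟩ := hsol
  set A := lam * α + mu * γ with hAdef
  set B := lam * β + mu * δ with hBdef
  set C := lam * A + mu * B with hCdef
  have hC : 0 < C := add_pos (mul_pos hlam h1) (mul_pos hmu h2)
  set T := r ^ 2 / (2 * C) with hTdef
  have hT : 0 < T := by positivity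
  set z₀ := lam * x₀ + mu * y₀ with hz₀def
  set g : ℝ → ℝ := fun s => if 0 ≤ s then A * (1 / x s) + B * (1 / y s) else 0 with hgdef
  have hg0 : ∀ s, 0 ≤ g s := by
    intro s
    by_cases hs : (0:ℝ) ≤ s
    · have hxs := (hnn s hs).1
      have hys := (hnn s hs).2
      have a1 : (0:ℝ) ≤ 1 / x s := by positivity
      have a2 : (0:ℝ) ≤ 1 / y s := by positivity
      have hgs : g s = A * (1 / x s) + B * (1 / y s) := if_pos hs
      rw [hgs]
      exact add_nonneg (mul_nonneg h1.le a1) (mul_nonneg h2.le a2)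
    · have hgs : g s = 0 := if_neg hs
      rw [hgs]
  have hgi : ∀ t, 0 ≤ t → IntegrableOn g (Set.Ioc 0 t) := by
    intro t ht
    obtain ⟨-, -, hxint, hyint, -, -⟩ := hmain t ht
    have hx' : IntegrableOn (fun s => 1 / x s) (Set.Ioc 0 t) :=
      (intervalIntegrable_iff_integrableOn_Ioc_of_le ht).mp hxint
    have hy' : IntegrableOn (fun s => 1 / y s) (Set.Ioc 0 t) :=
      (intervalIntegrable_iff_integrableOn_Ioc_of_le ht).mp hyint
    have h3 : IntegrableOn (fun s => A * (1 / x s) + B * (1 / y s)) (Set.Ioc 0 t) :=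
      (hx'.const_mul A).add (hy'.const_mul B)
    exact h3.congr_fun (fun s hs => by rw [hgdef]; simp [hs.1.le]) measurableSet_Ioc
  set G : ℝ → ℝ := fun t => ∫ s in Set.Ioc (0:ℝ) t, g s with hGdef
  have hzeq : ∀ t, 0 ≤ t → lam * x t + mu * y t = z₀ + G t := by
    intro t ht
    obtain ⟨-, -, hxint, hyint, hxe, hye⟩ := hmain t ht
    have hx' : IntegrableOn (fun s => 1 / x s) (Set.Ioc 0 t) :=
      (intervalIntegrable_iff_integrableOn_Ioc_of_le ht).mp hxint
    have hy' : IntegrableOn (fun s => 1 / y s) (Set.Ioc 0 t) :=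
      (intervalIntegrable_iff_integrableOn_Ioc_of_le ht).mp hyint
    have hGt : G t = A * (∫ s in (0:ℝ)..t, 1 / x s) + B * (∫ s in (0:ℝ)..t, 1 / y s) := by
      have e0 : G t = ∫ s in Set.Ioc (0:ℝ) t, g s := rfl
      have e1 : ∫ s in Set.Ioc (0:ℝ) t, g s
          = ∫ s in Set.Ioc (0:ℝ) t, (A * (1 / x s) + B * (1 / y s)) :=
        setIntegral_congr_fun measurableSet_Ioc (fun s hs => by rw [hgdef]; simp [hs.1.le])
      rw [e0, e1, integral_add (hx'.const_mul A) (hy'.const_mul B),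
        integral_const_mul, integral_const_mul,
        intervalIntegral.integral_of_le ht, intervalIntegral.integral_of_le ht]
    rw [hxe, hye, hGt]
    ring
  -- a.e. lower bound on the product
  have hnull : (volume.restrict (Set.Ioc 0 T)) {u | x u = 0 ∨ y u = 0} = 0 := by
    obtain ⟨hxnull, hynull, -, -, -, -⟩ := hmain T hT.le
    rw [Measure.restrict_apply' measurableSet_Ioc]
    refine measure_mono_null (fun u hu => ?_)
      (measure_union_null hxnull hynull)
    obtain ⟨hu1, hu2⟩ := hu
    have hmem : u ∈ Set.Icc (0:ℝ) T := ⟨hu2.1.le, hu2.2⟩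
    rcases hu1 with h | h
    · exact Or.inl ⟨hmem, h⟩
    · exact Or.inr ⟨hmem, h⟩
  have hae : ∀ᵐ u ∂(volume.restrict (Set.Ioc 0 T)), C ≤ (z₀ + G u) * g u := by
    have h3 : ∀ᵐ u ∂(volume.restrict (Set.Ioc 0 T)), ¬(x u = 0 ∨ y u = 0) :=
      (ae_iff).mpr (measure_mono_null (fun a ha => not_not.mp ha) hnull)
    filter_upwards [h3, ae_restrict_mem measurableSet_Ioc] with u hu hmem
    push_neg at hu
    have hxpos : 0 < x u := lt_of_le_of_ne (hnn u hmem.1.le).1 (Ne.symm hu.1)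
    have hypos : 0 < y u := lt_of_le_of_ne (hnn u hmem.1.le).2 (Ne.symm hu.2)
    have hzu : z₀ + G u = lam * x u + mu * y u := (hzeq u hmem.1.le).symm
    have hgu : g u = A * (1 / x u) + B * (1 / y u) := by rw [hgdef]; simp [hmem.1.le]
    rw [hzu, hgu, hCdef]
    have hxne : x u ≠ 0 := hxpos.ne'
    have hyne : y u ≠ 0 := hypos.ne'
    have key : (lam * x u + mu * y u) * (A * (1 / x u) + B * (1 / y u))
        = lam * A + mu * B + (lam * B * (x u / y u) + mu * A * (y u / x u)) := by
      field_simp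
      ring
    rw [key]
    have c1 : 0 ≤ lam * B * (x u / y u) := by positivity
    have c2 : 0 ≤ mu * A * (y u / x u) := by positivity
    linarith
  -- integrability of the products
  have hgI : IntervalIntegrable g volume 0 T :=
    (intervalIntegrable_iff_integrableOn_Ioc_of_le hT.le).mpr (hgi T hT.le)
  have hgIcc : IntegrableOn g (Set.Icc 0 T) :=
    (integrableOn_Icc_iff_integrableOn_Ioc).mpr (hgi T hT.le)
  have hGcont : ContinuousOn G (Set.Icc 0 T) := intervalIntegral.continuousOn_primitive hgIcc
  have huIcc : Set.uIcc (0:ℝ) T = Set.Icc 0 T := Set.uIcc_of_le hT.le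
  have hGgI : IntervalIntegrable (fun u => G u * g u) volume 0 T :=
    hgI.continuousOn_mul (huIcc ▸ hGcont)
  have hzgI : IntervalIntegrable (fun u => (z₀ + G u) * g u) volume 0 T :=
    hgI.continuousOn_mul (huIcc ▸ (continuousOn_const.add hGcont))
  have hGgOn : IntegrableOn (fun u => G u * g u) (Set.Ioc 0 T) :=
    (intervalIntegrable_iff_integrableOn_Ioc_of_le hT.le).mp hGgI
  have hzgOn : IntegrableOn (fun u => (z₀ + G u) * g u) (Set.Ioc 0 T) :=
    (intervalIntegrable_iff_integrableOn_Ioc_of_le hT.le).mp hzgI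
  have key1 : C * T ≤ ∫ u in Set.Ioc (0:ℝ) T, (z₀ + G u) * g u := by
    have hconst : IntegrableOn (fun _ : ℝ => C) (Set.Ioc 0 T) :=
      integrableOn_const measure_Ioc_lt_top.ne
    have := integral_mono_ae hconst hzgOn hae
    calc C * T = ∫ _ in Set.Ioc (0:ℝ) T, C := by
          rw [setIntegral_const, Real.volume_real_Ioc_of_le hT.le, smul_eq_mul, sub_zero]
          ring
      _ ≤ _ := this
  have key2 : ∫ u in Set.Ioc (0:ℝ) T, (z₀ + G u) * g u
      = z₀ * G T + ∫ u in Set.Ioc (0:ℝ) T, G u * g u := by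
    have e1 : ∀ u, (z₀ + G u) * g u = z₀ * g u + G u * g u := fun u => by ring
    simp_rw [e1]
    rw [integral_add ((hgi T hT.le).const_mul z₀) hGgOn, integral_const_mul]
  have key3 := half_sq_aux g hg0 T (hgi T hT.le)
  have h2CT : 2 * C * T = r ^ 2 := by
    rw [hTdef]
    field_simp
  have hrleT : r ≤ lam * x T + mu * y T := by
    have hzT : lam * x T + mu * y T = z₀ + G T := hzeq T hT.le
    have hzTnn : 0 ≤ z₀ + G T := by
      rw [← hzT]
      exact add_nonneg (mul_nonneg hlam.le (hnn T hT.le).1)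
        (mul_nonneg hmu.le (hnn T hT.le).2)
    have hz₀nn : 0 ≤ z₀ := add_nonneg (mul_nonneg hlam.le hx₀) (mul_nonneg hmu.le hy₀)
    rw [hzT]
    nlinarith [key1, key2, key3, h2CT, sq_nonneg z₀]
  -- IVT
  have hzc : ContinuousOn (fun t => lam * x t + mu * y t) (Set.Icc 0 T) := by
    have hsub : Set.Icc (0:ℝ) T ⊆ Set.Ici 0 := fun u hu => hu.1
    exact (continuousOn_const.mul (hxc.mono hsub)).add (continuousOn_const.mul (hyc.mono hsub))
  have hIVT := intermediate_value_Icc hT.le hzc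
  have hrmem : r ∈ Set.Icc (lam * x 0 + mu * y 0) (lam * x T + mu * y T) := by
    constructor
    · rw [hx0, hy0]; exact hstart
    · exact hrleT
  obtain ⟨t, htmem, hteq⟩ := hIVT hrmem
  refine ⟨⟨t, htmem.1, hteq⟩, ?_⟩
  exact le_trans (csInf_le ⟨0, fun a ha => ha.1⟩ ⟨htmem.1, hteq⟩) htmem.2
end

section
/- Assume hypothesis (H) and fix λ > 0, μ > 0 with λα + μγ > 0 and λβ + μδ > 0. Let u₁ = (x₁, y₁) ∈ S° with arctan(y₁/x₁) < arctan(d/c) (resp. > arctan(d/c)), and let A = {(x,y) ∈ S° : arctan(y₁/x₁) ≤ arctan(y/x) ≤ arctan(d/c)} (resp. B = {(x,y) ∈ S° : arctan(d/c) ≤ arctan(y/x) ≤ arctan(y₁/x₁)}). Then any solution to the system starting at a point of A stays in A for all t ≥ 0, and any solution starting at a point of B stays in B for all t ≥ 0. -/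
open MeasureTheory

/-- The angle `θ(x, y) = arctan (y / x)` of a point of the punctured quadrant `S°`,
with the convention `θ = π/2` when `x = 0`. -/
noncomputable def thetaFun (X Y : ℝ) : ℝ :=
  if X = 0 then Real.pi / 2 else Real.arctan (Y / X)

section Aux

open Set Filter

private lemma sol_swap {α β γ δ x₀ y₀ : ℝ} {x y : ℝ → ℝ}
    (h : IsSolution α β γ δ x₀ y₀ x y) : IsSolution δ γ β α y₀ x₀ y x := by
  obtain ⟨hx, hy, hnn, hx0, hy0, hrest⟩ := h
  refine ⟨hy, hx, fun t ht => ⟨(hnn t ht).2, (hnn t ht).1⟩, hy0, hx0, fun t ht => ?_⟩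
  obtain ⟨nx, ny, ix, iy, ex, ey⟩ := hrest t ht
  exact ⟨ny, nx, iy, ix, by rw [ey]; ring, by rw [ex]; ring⟩

private lemma nonvanish {α β γ δ x₀ y₀ : ℝ} {x y : ℝ → ℝ}
    (h : IsSolution α β γ δ x₀ y₀ x y) (lam mu : ℝ) (hlam : 0 < lam) (hmu : 0 < mu)
    (h1 : 0 < lam * α + mu * γ) (h2 : 0 < lam * β + mu * δ)
    (hx0 : 0 ≤ x₀) (hy0 : 0 ≤ y₀) (hne : ¬(x₀ = 0 ∧ y₀ = 0)) :
    ∀ t ≥ (0:ℝ), ¬(x t = 0 ∧ y t = 0) := by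
  obtain ⟨hx, hy, hnn, hx00, hy00, hrest⟩ := h
  intro t ht hcon
  obtain ⟨nx, ny, ix, iy, ex, ey⟩ := hrest t ht
  have hIx : 0 ≤ ∫ s in (0:ℝ)..t, 1 / x s :=
    intervalIntegral.integral_nonneg ht (fun u hu => by
      have := (hnn u hu.1).1; positivity)
  have hIy : 0 ≤ ∫ s in (0:ℝ)..t, 1 / y s :=
    intervalIntegral.integral_nonneg ht (fun u hu => by
      have := (hnn u hu.1).2; positivity)
  have hL0 : 0 < lam * x₀ + mu * y₀ := by
    rcases hx0.lt_or_eq with h | h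
    · nlinarith
    · have : y₀ ≠ 0 := fun hy => hne ⟨h.symm, hy⟩
      have : 0 < y₀ := lt_of_le_of_ne hy0 (Ne.symm this)
      nlinarith
  have : lam * x t + mu * y t = lam * x₀ + mu * y₀ +
      (lam * α + mu * γ) * (∫ s in (0:ℝ)..t, 1 / x s) +
      (lam * β + mu * δ) * (∫ s in (0:ℝ)..t, 1 / y s) := by
    rw [ex, ey]; ring
  rw [hcon.1, hcon.2] at this
  nlinarith [mul_nonneg h1.le hIx, mul_nonneg h2.le hIy]

private lemma pos_of_H (α β γ δ : ℝ) (hα : 0 < α) (hδ : 0 < δ)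
    (hH : max β γ ≥ 0 ∨ β * γ < α * δ) :
    0 < 2 * α + β / δ * (β - γ + Real.sqrt ((β - γ) ^ 2 + 4 * α * δ)) := by
  set K := Real.sqrt ((β - γ) ^ 2 + 4 * α * δ) with hK
  have hK2 : K ^ 2 = (β - γ) ^ 2 + 4 * α * δ := Real.sq_sqrt (by positivity)
  have hKpos : 0 < K := Real.sqrt_pos.2 (by positivity)
  have hKgt : β - γ < K := by nlinarith [sq_nonneg (K - (β - γ)), sq_nonneg (K + (β - γ))]
  have hKgt' : -(β - γ) < K := by nlinarith [sq_nonneg (K - (β - γ)), sq_nonneg (K + (β - γ))]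
  have key : 0 < 2 * α * δ + β * (β - γ + K) := by
    rcases le_or_gt 0 β with hβ | hβ
    · nlinarith
    · have hβγ : β * γ < α * δ := by
        rcases hH with h | h
        · rcases le_total β γ with h' | h'
          · rw [max_eq_right h'] at h; nlinarith
          · exfalso; rw [max_eq_left h'] at h; linarith
        · exact h
      have h3 : 0 < 2 * α * δ + β * (β - γ) := by nlinarith
      have hβK : β ^ 2 * K ^ 2 = β ^ 2 * ((β - γ) ^ 2 + 4 * α * δ) := by rw [hK2]
      have h4 : (-β * K) ^ 2 < (2 * α * δ + β * (β - γ)) ^ 2 := by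
        nlinarith [hβK, mul_pos (mul_pos hα hδ) (sub_pos.2 hβγ)]
      have h5 : -β * K < 2 * α * δ + β * (β - γ) :=
        lt_of_pow_lt_pow_left₀ 2 h3.le h4
      nlinarith [h5]
  have heq : 2 * α + β / δ * (β - γ + K) = (2 * α * δ + β * (β - γ + K)) / δ := by
    field_simp
  rw [heq]
  exact div_pos key hδ

private lemma barrier_upper {α β γ δ x₀ y₀ : ℝ} {x y : ℝ → ℝ}
    (hsol : IsSolution α β γ δ x₀ y₀ x y)
    (hne : ∀ t ≥ (0:ℝ), ¬(x t = 0 ∧ y t = 0))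
    (a b : ℝ) (ha : 0 < a) (hb : 0 ≤ b)
    (hphi : 0 < α * b ^ 2 + (β - γ) * a * b - δ * a ^ 2)
    (h0 : a * y₀ ≤ b * x₀) :
    ∀ t ≥ (0:ℝ), a * y t ≤ b * x t := by
  obtain ⟨hxc, hyc, hnn, hx00, hy00, hrest⟩ := hsol
  by_contra hcon
  push_neg at hcon
  obtain ⟨t₀, ht₀, hGt₀⟩ := hcon
  set A := b * α - a * γ with hA
  set B := b * β - a * δ with hB
  set G : ℝ → ℝ := fun t => b * x t - a * y t with hGdef
  have hG0 : 0 ≤ G 0 := by simp only [hGdef, hx00, hy00]; linarith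
  have hGt₀' : G t₀ < 0 := by simp only [hGdef]; linarith
  have ht₀pos : 0 < t₀ := by
    rcases ht₀.lt_or_eq with h | h
    · exact h
    · exfalso; rw [← h] at hGt₀'; linarith
  have hGc : ContinuousOn G (Icc 0 t₀) := by
    apply ContinuousOn.sub
    · exact continuousOn_const.mul (hxc.mono (Icc_subset_Ici_self))
    · exact continuousOn_const.mul (hyc.mono (Icc_subset_Ici_self))
  set S : Set ℝ := Icc 0 t₀ ∩ G ⁻¹' (Ici 0) with hS
  have hSclosed : IsClosed S := hGc.preimage_isClosed_of_isClosed isClosed_Icc isClosed_Ici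
  have hSne : S.Nonempty := ⟨0, ⟨le_refl 0, ht₀⟩, hG0⟩
  have hSbdd : BddAbove S := ⟨t₀, fun s hs => hs.1.2⟩
  set T := sSup S with hT
  have hTmem : T ∈ S := hSclosed.csSup_mem hSne hSbdd
  have hT0 : 0 ≤ T := hTmem.1.1
  have hTt₀ : T ≤ t₀ := hTmem.1.2
  have hGT : 0 ≤ G T := hTmem.2
  have hTlt : T < t₀ := by
    rcases hTt₀.lt_or_eq with h | h
    · exact h
    · exfalso; rw [h] at hGT; linarith
  have hafter : ∀ s, T < s → s ≤ t₀ → G s < 0 := by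
    intro s hs1 hs2
    by_contra h
    push_neg at h
    exact absurd (le_csSup hSbdd ⟨⟨le_trans hT0 hs1.le, hs2⟩, h⟩) (not_le.2 hs1)
  have hGT0 : G T = 0 := by
    refine le_antisymm ?_ hGT
    have hcw : ContinuousWithinAt G (Icc 0 t₀) T := hGc T ⟨hT0, hTt₀⟩
    have htd : Tendsto G (nhdsWithin T (Ioc T t₀)) (nhds (G T)) :=
      hcw.tendsto.mono_left (nhdsWithin_mono T (fun s hs => ⟨le_trans hT0 hs.1.le, hs.2⟩))
    have hev : ∀ᶠ s in nhdsWithin T (Ioc T t₀), G s ≤ 0 :=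
      eventually_of_mem self_mem_nhdsWithin (fun s hs => (hafter s hs.1 hs.2).le)
    haveI : (nhdsWithin T (Ioc T t₀)).NeBot := left_nhdsWithin_Ioc_neBot hTlt
    exact le_of_tendsto htd hev
  have hGT0' : b * x T - a * y T = 0 := hGT0
  have hxT : 0 < x T := by
    rcases (hnn T hT0).1.lt_or_eq with h | h
    · exact h
    · exfalso
      apply hne T hT0
      constructor
      · exact h.symm
      · have : a * y T = 0 := by rw [← h] at hGT0'; linarith
        rcases mul_eq_zero.1 this with h' | h'
        · exact absurd h' ha.ne'
        · exact h'
  set H : ℝ → ℝ := fun s => A * y s + B * x s with hHdef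
  have hHT : 0 < H T := by
    have key : a * H T = x T * (α * b ^ 2 + (β - γ) * a * b - δ * a ^ 2) := by
      simp only [hHdef, hA, hB]
      linear_combination (-(b * α) + a * γ) * hGT0'
    nlinarith [mul_pos hxT hphi]
  have hHc : ContinuousOn H (Icc 0 t₀) := by
    apply ContinuousOn.add
    · exact continuousOn_const.mul (hyc.mono (Icc_subset_Ici_self))
    · exact continuousOn_const.mul (hxc.mono (Icc_subset_Ici_self))
  have hev : ∀ᶠ s in nhdsWithin T (Icc 0 t₀), 0 < H s :=
    (hHc T ⟨hT0, hTt₀⟩).eventually (eventually_gt_nhds hHT)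
  obtain ⟨r, hr, hball⟩ := Metric.mem_nhdsWithin_iff.1 hev
  set ε := min (r / 2) (t₀ - T) with hε
  have hεpos : 0 < ε := lt_min (by linarith) (by linarith)
  set t₂ := T + ε with ht₂
  have hTt₂ : T < t₂ := by simp only [ht₂]; linarith
  have ht₂t₀ : t₂ ≤ t₀ := by
    have : ε ≤ t₀ - T := min_le_right _ _
    simp only [ht₂]; linarith
  have ht₂0 : (0:ℝ) ≤ t₂ := le_trans hT0 hTt₂.le
  have hHpos : ∀ s ∈ Icc T t₂, 0 < H s := by
    intro s hs
    apply hball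
    constructor
    · rw [Metric.mem_ball, Real.dist_eq, abs_lt]
      have hh1 : s - T ≤ ε := by have := hs.2; simp only [ht₂] at this; linarith
      have hh2 : ε ≤ r / 2 := min_le_left _ _
      constructor
      · linarith [hs.1]
      · linarith
    · exact ⟨le_trans hT0 hs.1, le_trans hs.2 ht₂t₀⟩
  obtain ⟨hnx, hny, hix, hiy, hex2, hey2⟩ := hrest t₂ ht₂0
  obtain ⟨_, _, _, _, hexT, heyT⟩ := hrest T hT0
  have hsub1 : uIcc (0:ℝ) T ⊆ uIcc (0:ℝ) t₂ := by
    rw [uIcc_of_le hT0, uIcc_of_le ht₂0]; exact Icc_subset_Icc le_rfl hTt₂.le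
  have hsub2 : uIcc T t₂ ⊆ uIcc (0:ℝ) t₂ := by
    rw [uIcc_of_le hTt₂.le, uIcc_of_le ht₂0]; exact Icc_subset_Icc hT0 le_rfl
  have hX1 := hix.mono_set hsub1
  have hX2 := hix.mono_set hsub2
  have hY1 := hiy.mono_set hsub1
  have hY2 := hiy.mono_set hsub2
  have hsplitx : ∫ s in (0:ℝ)..t₂, 1 / x s = (∫ s in (0:ℝ)..T, 1 / x s) + ∫ s in T..t₂, 1 / x s :=
    (intervalIntegral.integral_add_adjacent_intervals hX1 hX2).symm
  have hsplity : ∫ s in (0:ℝ)..t₂, 1 / y s = (∫ s in (0:ℝ)..T, 1 / y s) + ∫ s in T..t₂, 1 / y s :=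
    (intervalIntegral.integral_add_adjacent_intervals hY1 hY2).symm
  have hGdiff : G t₂ = G T + (A * (∫ s in T..t₂, 1 / x s) + B * (∫ s in T..t₂, 1 / y s)) := by
    show b * x t₂ - a * y t₂ = (b * x T - a * y T) + _
    rw [hex2, hey2, hexT, heyT, hsplitx, hsplity]
    simp only [hA, hB]; ring
  have hcomb : ∫ s in T..t₂, (A * (1 / x s) + B * (1 / y s))
      = A * (∫ s in T..t₂, 1 / x s) + B * (∫ s in T..t₂, 1 / y s) := by
    rw [intervalIntegral.integral_add (hX2.const_mul A) (hY2.const_mul B),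
      intervalIntegral.integral_const_mul, intervalIntegral.integral_const_mul]
  have hN : volume ({s | s ∈ Icc (0:ℝ) t₂ ∧ x s = 0} ∪ {s | s ∈ Icc (0:ℝ) t₂ ∧ y s = 0}) = 0 :=
    le_antisymm (le_trans (measure_union_le _ _) (by rw [hnx, hny]; simp)) zero_le
  have hae : (0:ℝ → ℝ) ≤ᵐ[volume.restrict (Icc T t₂)] fun s => A * (1 / x s) + B * (1 / y s) := by
    have hmem : ∀ᵐ s ∂(volume.restrict (Icc T t₂)), s ∈ Icc T t₂ :=
      ae_restrict_mem measurableSet_Icc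
    have hnmem : ∀ᵐ s ∂(volume.restrict (Icc T t₂)),
        s ∉ ({s | s ∈ Icc (0:ℝ) t₂ ∧ x s = 0} ∪ {s | s ∈ Icc (0:ℝ) t₂ ∧ y s = 0}) :=
      ae_restrict_of_ae (measure_eq_zero_iff_ae_notMem.1 hN)
    filter_upwards [hmem, hnmem] with s hs hsn
    simp only [Pi.zero_apply]
    have hs0 : (0:ℝ) ≤ s := le_trans hT0 hs.1
    have hsI : s ∈ Icc (0:ℝ) t₂ := ⟨hs0, hs.2⟩
    have hxs : 0 < x s := by
      rcases (hnn s hs0).1.lt_or_eq with h | h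
      · exact h
      · exact absurd (Set.mem_union_left _
          (show s ∈ {s | s ∈ Icc (0:ℝ) t₂ ∧ x s = 0} from ⟨hsI, h.symm⟩)) hsn
    have hys : 0 < y s := by
      rcases (hnn s hs0).2.lt_or_eq with h | h
      · exact h
      · exact absurd (Set.mem_union_right _
          (show s ∈ {s | s ∈ Icc (0:ℝ) t₂ ∧ y s = 0} from ⟨hsI, h.symm⟩)) hsn
    have hHs : 0 < H s := hHpos s hs
    have heq : A * (1 / x s) + B * (1 / y s) = (A * y s + B * x s) / (x s * y s) := by
      field_simp
    rw [heq]
    exact div_nonneg hHs.le (mul_pos hxs hys).le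
  have hint : 0 ≤ ∫ s in T..t₂, (A * (1 / x s) + B * (1 / y s)) :=
    intervalIntegral.integral_nonneg_of_ae_restrict hTt₂.le hae
  have hfin : G t₂ < 0 := hafter t₂ hTt₂ ht₂t₀
  rw [hGdiff, hGT0] at hfin
  rw [hcomb] at hint
  linarith

private lemma barrier_lower {α β γ δ x₀ y₀ : ℝ} {x y : ℝ → ℝ}
    (hsol : IsSolution α β γ δ x₀ y₀ x y)
    (hne : ∀ t ≥ (0:ℝ), ¬(x t = 0 ∧ y t = 0))
    (a b : ℝ) (ha : 0 ≤ a) (hb : 0 < b)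
    (hphi : α * b ^ 2 + (β - γ) * a * b - δ * a ^ 2 < 0)
    (h0 : b * x₀ ≤ a * y₀) :
    ∀ t ≥ (0:ℝ), b * x t ≤ a * y t := by
  have hne' : ∀ t ≥ (0:ℝ), ¬(y t = 0 ∧ x t = 0) := fun t ht h => hne t ht ⟨h.2, h.1⟩
  exact barrier_upper (sol_swap hsol) hne' b a hb ha (by nlinarith) h0

private lemma cd_props (α β γ δ : ℝ) (hα : 0 < α) (hδ : 0 < δ)
    (hH : max β γ ≥ 0 ∨ β * γ < α * δ) (c d : ℝ)
    (hc : c = Real.sqrt (2 * α + β / δ * (β - γ + Real.sqrt ((β - γ) ^ 2 + 4 * α * δ))))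
    (hd : d = Real.sqrt (2 * δ + γ / α * (γ - β + Real.sqrt ((β - γ) ^ 2 + 4 * α * δ)))) :
    0 < c ∧ 0 < d ∧ α * d ^ 2 + (β - γ) * c * d - δ * c ^ 2 = 0 := by
  have hcpos2 := pos_of_H α β γ δ hα hδ hH
  have hH' : max γ β ≥ 0 ∨ γ * β < δ * α := by
    rcases hH with h | h
    · left; rwa [max_comm]
    · right; rwa [mul_comm γ β, mul_comm δ α]
  have hdpos2' := pos_of_H δ γ β α hδ hα hH'
  have hnz : (γ - β) ^ 2 + 4 * δ * α = (β - γ) ^ 2 + 4 * α * δ := by ring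
  rw [hnz] at hdpos2'
  have hcpos : 0 < c := by rw [hc]; exact Real.sqrt_pos.2 hcpos2
  have hdpos : 0 < d := by rw [hd]; exact Real.sqrt_pos.2 hdpos2'
  refine ⟨hcpos, hdpos, ?_⟩
  set K := Real.sqrt ((β - γ) ^ 2 + 4 * α * δ) with hK
  have hK2 : K ^ 2 = (β - γ) ^ 2 + 4 * α * δ := Real.sq_sqrt (by positivity)
  have hKpos : 0 < K := Real.sqrt_pos.2 (by positivity)
  have hKgt : β - γ < K := by nlinarith [sq_nonneg (K - (β - γ)), sq_nonneg (K + (β - γ))]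
  have hcsq : δ * c ^ 2 = 2 * α * δ + β * (β - γ + K) := by
    rw [hc, Real.sq_sqrt hcpos2.le]; field_simp
  have hdsq : α * d ^ 2 = 2 * δ * α + γ * (γ - β + K) := by
    rw [hd, Real.sq_sqrt hdpos2'.le]; field_simp
  have hsq : (2 * α * d) ^ 2 * δ = (c * (K - (β - γ))) ^ 2 * δ := by
    calc (2 * α * d) ^ 2 * δ = 4 * α * δ * (α * d ^ 2) := by ring
      _ = 4 * α * δ * (2 * δ * α + γ * (γ - β + K)) := by rw [hdsq]
      _ = (K - (β - γ)) ^ 2 * (2 * α * δ + β * (β - γ + K)) := by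
          linear_combination (β * (β - γ) - 2 * α * δ - β * K) * hK2
      _ = (K - (β - γ)) ^ 2 * (δ * c ^ 2) := by rw [hcsq]
      _ = (c * (K - (β - γ))) ^ 2 * δ := by ring
  have hKu : 0 < K - (β - γ) := by linarith
  have hdc : 2 * α * d = c * (K - (β - γ)) := by
    have hh1 : (0:ℝ) ≤ 2 * α * d := by positivity
    have hh2 : (0:ℝ) ≤ c * (K - (β - γ)) := by positivity
    have hh3 : (2 * α * d) ^ 2 = (c * (K - (β - γ))) ^ 2 := mul_right_cancel₀ hδ.ne' hsq
    rw [sq_eq_sq_iff_abs_eq_abs, abs_of_nonneg hh1, abs_of_nonneg hh2] at hh3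
    exact hh3
  have key : 4 * α * (α * d ^ 2 + (β - γ) * c * d - δ * c ^ 2) = 0 := by
    calc 4 * α * (α * d ^ 2 + (β - γ) * c * d - δ * c ^ 2)
        = (2 * α * d) ^ 2 + 2 * (β - γ) * c * (2 * α * d) - 4 * α * (δ * c ^ 2) := by ring
      _ = (c * (K - (β - γ))) ^ 2 + 2 * (β - γ) * c * (c * (K - (β - γ)))
          - 4 * α * (δ * c ^ 2) := by rw [hdc]
      _ = c ^ 2 * (K ^ 2 - (β - γ) ^ 2 - 4 * α * δ) := by ring
      _ = 0 := by rw [hK2]; ring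
  exact (mul_eq_zero.1 key).resolve_left (by positivity)

private lemma phi_pos {α β γ δ c d : ℝ} (hα : 0 < α) (hδ : 0 < δ)
    (hcpos : 0 < c) (hdpos : 0 < d)
    (hcd : α * d ^ 2 + (β - γ) * c * d - δ * c ^ 2 = 0)
    (aa bb : ℝ) (haa : 0 ≤ aa) (hbb : 0 ≤ bb) (hnab : ¬(aa = 0 ∧ bb = 0)) :
    (d * aa < bb * c → 0 < α * bb ^ 2 + (β - γ) * aa * bb - δ * aa ^ 2) ∧
    (bb * c < d * aa → α * bb ^ 2 + (β - γ) * aa * bb - δ * aa ^ 2 < 0) := by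
  have hsign : c ^ 2 * (α * bb ^ 2 + (β - γ) * aa * bb - δ * aa ^ 2)
      = (bb * c - d * aa) * (α * (bb * c + d * aa) + (β - γ) * aa * c) := by
    linear_combination aa ^ 2 * hcd
  have hαd : 0 < α * d + (β - γ) * c := by
    have hh1 : d * (α * d + (β - γ) * c) = δ * c ^ 2 := by linear_combination hcd
    have hh2 : 0 < δ * c ^ 2 := by positivity
    by_contra hcon'
    push_neg at hcon'
    nlinarith [mul_nonneg hdpos.le (neg_nonneg.2 hcon')]
  have hM : 0 < α * (bb * c + d * aa) + (β - γ) * aa * c := by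
    have heq : α * (bb * c + d * aa) + (β - γ) * aa * c
        = α * bb * c + aa * (α * d + (β - γ) * c) := by ring
    rw [heq]
    rcases haa.lt_or_eq with h | h
    · nlinarith [mul_nonneg (mul_nonneg hα.le hbb) hcpos.le, mul_pos h hαd]
    · have hbb' : 0 < bb := hbb.lt_or_eq.resolve_right (fun hb => hnab ⟨h.symm, hb.symm⟩)
      nlinarith [mul_pos (mul_pos hα hbb') hcpos]
  constructor
  · intro hlt
    nlinarith [hsign, mul_pos (sub_pos.2 hlt) hM, mul_pos hcpos hcpos]
  · intro hlt
    nlinarith [hsign, mul_pos (sub_pos.2 hlt) hM, mul_pos hcpos hcpos]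

end Aux

set_option maxHeartbeats 2000000 in
/-- Under (H), with `λ, μ > 0` such that `λα + μγ > 0` and `λβ + μδ > 0`,
let `u₁ = (x₁, y₁) ∈ S°`. If `arctan (y₁/x₁) < arctan (d/c)` and
`A = {(x,y) ∈ S° : arctan (y₁/x₁) ≤ arctan (y/x) ≤ arctan (d/c)}`, then any solution
starting at a point of `A` stays in `A` for all `t ≥ 0`; similarly, if
`arctan (y₁/x₁) > arctan (d/c)` and
`B = {(x,y) ∈ S° : arctan (d/c) ≤ arctan (y/x) ≤ arctan (y₁/x₁)}`, then any solution
starting at a point of `B` stays in `B` for all `t ≥ 0`. -/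
theorem sector_invariance (α β γ δ : ℝ) (hα : 0 < α) (hδ : 0 < δ)
    (hH : max β γ ≥ 0 ∨ β * γ < α * δ)
    (lam mu : ℝ) (hlam : 0 < lam) (hmu : 0 < mu)
    (h1 : 0 < lam * α + mu * γ) (h2 : 0 < lam * β + mu * δ)
    (c d : ℝ)
    (hc : c = Real.sqrt (2 * α + β / δ * (β - γ + Real.sqrt ((β - γ) ^ 2 + 4 * α * δ))))
    (hd : d = Real.sqrt (2 * δ + γ / α * (γ - β + Real.sqrt ((β - γ) ^ 2 + 4 * α * δ))))
    (x₁ y₁ : ℝ) (hx₁ : 0 ≤ x₁) (hy₁ : 0 ≤ y₁) (hne : ¬(x₁ = 0 ∧ y₁ = 0)) :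
    (thetaFun x₁ y₁ < Real.arctan (d / c) →
      ∀ x₀ y₀ : ℝ,
        (0 ≤ x₀ ∧ 0 ≤ y₀ ∧ ¬(x₀ = 0 ∧ y₀ = 0) ∧
          thetaFun x₁ y₁ ≤ thetaFun x₀ y₀ ∧ thetaFun x₀ y₀ ≤ Real.arctan (d / c)) →
        ∀ x y : ℝ → ℝ, IsSolution α β γ δ x₀ y₀ x y →
          ∀ t ≥ (0:ℝ),
            0 ≤ x t ∧ 0 ≤ y t ∧ ¬(x t = 0 ∧ y t = 0) ∧
            thetaFun x₁ y₁ ≤ thetaFun (x t) (y t) ∧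
            thetaFun (x t) (y t) ≤ Real.arctan (d / c)) ∧
    (Real.arctan (d / c) < thetaFun x₁ y₁ →
      ∀ x₀ y₀ : ℝ,
        (0 ≤ x₀ ∧ 0 ≤ y₀ ∧ ¬(x₀ = 0 ∧ y₀ = 0) ∧
          Real.arctan (d / c) ≤ thetaFun x₀ y₀ ∧ thetaFun x₀ y₀ ≤ thetaFun x₁ y₁) →
        ∀ x y : ℝ → ℝ, IsSolution α β γ δ x₀ y₀ x y →
          ∀ t ≥ (0:ℝ),
            0 ≤ x t ∧ 0 ≤ y t ∧ ¬(x t = 0 ∧ y t = 0) ∧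
            Real.arctan (d / c) ≤ thetaFun (x t) (y t) ∧
            thetaFun (x t) (y t) ≤ thetaFun x₁ y₁) := by
  obtain ⟨hcpos, hdpos, hcd⟩ := cd_props α β γ δ hα hδ hH c d hc hd
  have hphipos : ∀ aa bb : ℝ, 0 ≤ aa → 0 ≤ bb → ¬(aa = 0 ∧ bb = 0) → d * aa < bb * c →
      0 < α * bb ^ 2 + (β - γ) * aa * bb - δ * aa ^ 2 :=
    fun aa bb haa hbb hnab => (phi_pos hα hδ hcpos hdpos hcd aa bb haa hbb hnab).1
  have hphineg : ∀ aa bb : ℝ, 0 ≤ aa → 0 ≤ bb → ¬(aa = 0 ∧ bb = 0) → bb * c < d * aa →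
      α * bb ^ 2 + (β - γ) * aa * bb - δ * aa ^ 2 < 0 :=
    fun aa bb haa hbb hnab => (phi_pos hα hδ hcpos hdpos hcd aa bb haa hbb hnab).2
  constructor
  · -- Part A
    rintro hA x₀ y₀ ⟨hx0, hy0, hne0, hth1, hth2⟩ x y hsol t ht
    have hnv := nonvanish hsol lam mu hlam hmu h1 h2 hx0 hy0 hne0
    have hnn := hsol.2.2.1
    have hxt := (hnn t ht).1
    have hyt := (hnn t ht).2
    have hx₁pos : 0 < x₁ := by
      rcases hx₁.lt_or_eq with h | h
      · exact h
      · exfalso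
        have hh : thetaFun x₁ y₁ = Real.pi / 2 := by simp [thetaFun, ← h]
        rw [hh] at hA
        linarith [Real.arctan_lt_pi_div_two (d / c)]
    have hx₀pos : 0 < x₀ := by
      rcases hx0.lt_or_eq with h | h
      · exact h
      · exfalso
        have hh : thetaFun x₀ y₀ = Real.pi / 2 := by simp [thetaFun, ← h]
        rw [hh] at hth2
        linarith [Real.arctan_lt_pi_div_two (d / c)]
    simp only [thetaFun, if_neg hx₁pos.ne', if_neg hx₀pos.ne'] at hA hth1 hth2
    have hr1 : y₁ * c < d * x₁ := by
      have := Real.arctan_strictMono.lt_iff_lt.1 hA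
      rw [div_lt_div_iff₀ hx₁pos hcpos] at this
      linarith
    have hst1 : y₁ * x₀ ≤ x₁ * y₀ := by
      have := Real.arctan_strictMono.le_iff_le.1 hth1
      rw [div_le_div_iff₀ hx₁pos hx₀pos] at this
      linarith
    have hst2 : c * y₀ ≤ d * x₀ := by
      have := Real.arctan_strictMono.le_iff_le.1 hth2
      rw [div_le_div_iff₀ hx₀pos hcpos] at this
      linarith
    have hb2 : ∀ b', d < b' → c * y t ≤ b' * x t := by
      intro b' hb'
      refine barrier_upper hsol hnv c b' hcpos (by linarith) ?_ ?_ t ht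
      · exact hphipos c b' hcpos.le (by linarith) (fun h => hcpos.ne' h.1)
          (by nlinarith)
      · nlinarith [mul_nonneg (by linarith : (0:ℝ) ≤ b' - d) hx0]
    have hup : c * y t ≤ d * x t := by
      by_contra hlt
      push_neg at hlt
      have hxtpos : 0 < x t := by
        rcases hxt.lt_or_eq with h | h
        · exact h
        · exfalso
          have hh1 := hb2 (d + 1) (by linarith)
          rw [← h] at hh1
          have hyt0 : y t = 0 := by nlinarith
          exact hnv t ht ⟨h.symm, hyt0⟩
      set b' := (d * x t + c * y t) / (2 * x t) with hb'
      have hd_b' : d < b' := by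
        rw [hb', lt_div_iff₀ (by linarith)]; nlinarith
      have hh2 := hb2 b' hd_b'
      have hbx : b' * x t = (d * x t + c * y t) / 2 := by
        rw [hb']; field_simp
      rw [hbx] at hh2; linarith
    have hxtpos : 0 < x t := by
      rcases hxt.lt_or_eq with h | h
      · exact h
      · exfalso
        have hyt0 : y t = 0 := by
          rw [← h] at hup; nlinarith
        exact hnv t ht ⟨h.symm, hyt0⟩
    have hlow : y₁ * x t ≤ x₁ * y t := by
      rcases hy₁.lt_or_eq with hy₁pos | hy₁0
      · exact barrier_lower hsol hnv x₁ y₁ hx₁ hy₁pos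
          (hphineg x₁ y₁ hx₁ hy₁ hne hr1) hst1 t ht
      · rw [← hy₁0]; nlinarith [mul_nonneg hx₁ hyt]
    refine ⟨hxt, hyt, hnv t ht, ?_, ?_⟩
    · simp only [thetaFun, if_neg hx₁pos.ne', if_neg hxtpos.ne']
      apply Real.arctan_strictMono.monotone
      rw [div_le_div_iff₀ hx₁pos hxtpos]
      nlinarith
    · simp only [thetaFun, if_neg hxtpos.ne']
      apply Real.arctan_strictMono.monotone
      rw [div_le_div_iff₀ hxtpos hcpos]
      nlinarith
  · -- Part B
    rintro hB x₀ y₀ ⟨hx0, hy0, hne0, hth1, hth2⟩ x y hsol t ht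
    have hnv := nonvanish hsol lam mu hlam hmu h1 h2 hx0 hy0 hne0
    have hnn := hsol.2.2.1
    have hxt := (hnn t ht).1
    have hyt := (hnn t ht).2
    have hy₁pos : 0 < y₁ := by
      rcases hy₁.lt_or_eq with h | h
      · exact h
      · exfalso
        have hx₁ne : x₁ ≠ 0 := fun hx => hne ⟨hx, h.symm⟩
        have hh : thetaFun x₁ y₁ = 0 := by
          simp [thetaFun, hx₁ne, ← h]
        rw [hh] at hB
        have harc : 0 < Real.arctan (d / c) := by
          have := Real.arctan_strictMono (show (0:ℝ) < d / c from div_pos hdpos hcpos)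
          rwa [Real.arctan_zero] at this
        linarith
    have hst_low : d * x₀ ≤ c * y₀ := by
      rcases hx0.lt_or_eq with hx₀pos | hx₀0
      · have h := hth1
        simp only [thetaFun, if_neg hx₀pos.ne'] at h
        have := Real.arctan_strictMono.le_iff_le.1 h
        rw [div_le_div_iff₀ hcpos hx₀pos] at this
        linarith
      · rw [← hx₀0]; nlinarith [mul_nonneg hcpos.le hy0]
    have hlowb : ∀ b', 0 < b' → b' < d → b' * x t ≤ c * y t := by
      intro b' hb0 hbd
      refine barrier_lower hsol hnv c b' hcpos.le hb0 ?_ ?_ t ht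
      · exact hphineg c b' hcpos.le hb0.le (fun h => hcpos.ne' h.1) (by nlinarith)
      · nlinarith [mul_nonneg (by linarith : (0:ℝ) ≤ d - b') hx0]
    have hlow : d * x t ≤ c * y t := by
      rcases hxt.lt_or_eq with hxtpos | hxt0
      · by_contra hlt
        push_neg at hlt
        set b' := (d * x t + c * y t) / (2 * x t) with hb'
        have hc_y : 0 ≤ c * y t := mul_nonneg hcpos.le hyt
        have hh1 : 0 < b' := by
          rw [hb']; apply div_pos; nlinarith; linarith
        have hh2 : b' < d := by
          rw [hb', div_lt_iff₀ (by linarith)]; nlinarith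
        have hh3 := hlowb b' hh1 hh2
        have hbx : b' * x t = (d * x t + c * y t) / 2 := by
          rw [hb']; field_simp
        rw [hbx] at hh3; linarith
      · rw [← hxt0]; nlinarith [mul_nonneg hcpos.le hyt]
    rcases hx₁.lt_or_eq with hx₁pos | hx₁0
    · have hBrat : d * x₁ < y₁ * c := by
        have h := hB
        simp only [thetaFun, if_neg hx₁pos.ne'] at h
        have := Real.arctan_strictMono.lt_iff_lt.1 h
        rw [div_lt_div_iff₀ hcpos hx₁pos] at this
        linarith
      have hx₀pos : 0 < x₀ := by
        rcases hx0.lt_or_eq with h | h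
        · exact h
        · exfalso
          have hh : thetaFun x₀ y₀ = Real.pi / 2 := by simp [thetaFun, ← h]
          rw [hh] at hth2
          simp only [thetaFun, if_neg hx₁pos.ne'] at hth2
          linarith [Real.arctan_lt_pi_div_two (y₁ / x₁)]
      have hst_up : x₁ * y₀ ≤ y₁ * x₀ := by
        have h := hth2
        simp only [thetaFun, if_neg hx₀pos.ne', if_neg hx₁pos.ne'] at h
        have := Real.arctan_strictMono.le_iff_le.1 h
        rw [div_le_div_iff₀ hx₀pos hx₁pos] at this
        linarith
      have hupp := barrier_upper hsol hnv x₁ y₁ hx₁pos hy₁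
        (hphipos x₁ y₁ hx₁ hy₁ hne hBrat) hst_up t ht
      have hxtpos : 0 < x t := by
        rcases hxt.lt_or_eq with h | h
        · exact h
        · exfalso
          have hyt0 : y t = 0 := by
            rw [← h] at hupp; nlinarith
          exact hnv t ht ⟨h.symm, hyt0⟩
      refine ⟨hxt, hyt, hnv t ht, ?_, ?_⟩
      · simp only [thetaFun, if_neg hxtpos.ne']
        apply Real.arctan_strictMono.monotone
        rw [div_le_div_iff₀ hcpos hxtpos]
        nlinarith
      · simp only [thetaFun, if_neg hxtpos.ne', if_neg hx₁pos.ne']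
        apply Real.arctan_strictMono.monotone
        rw [div_le_div_iff₀ hxtpos hx₁pos]
        nlinarith
    · refine ⟨hxt, hyt, hnv t ht, ?_, ?_⟩
      · rcases hxt.lt_or_eq with hxtpos | hxt0
        · simp only [thetaFun, if_neg hxtpos.ne']
          apply Real.arctan_strictMono.monotone
          rw [div_le_div_iff₀ hcpos hxtpos]
          nlinarith
        · simp only [thetaFun, if_pos hxt0.symm]
          exact (Real.arctan_lt_pi_div_two _).le
      · have hth₁ : thetaFun x₁ y₁ = Real.pi / 2 := by
          simp [thetaFun, ← hx₁0]
        rw [hth₁]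
        by_cases hxt0 : x t = 0
        · simp [thetaFun, hxt0]
        · simp only [thetaFun, if_neg hxt0]
          exact (Real.arctan_lt_pi_div_two _).le
end
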